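/- Let V ⊆ [n], let x ∈ ℝⁿ with ‖x‖₂ = √n and ‖x‖_∞² ≤ n^{1−ε} for some constant ε ∈ (0,1), and let t₁, t₂ ∈ ℕ. Define S_{t₁,t₂,V} = E[ ∏_{i=1}^{t₁} x_{v_i}² · ∏_{i=t₁+1}^{t₁+t₂} x_{v_i}⁴ ], where (v₁,…,v_{t₁+t₂}) is a uniformly random ordered tuple of pairwise distinct elements of [n]∖V. If |V|, t₁, t₂ ≤ K log n for a constant K, then there is a constant c > 0 (depending only on ε and K) such that for all sufficiently large n: S_{t₁,t₂,V} ≤ (1 + n^{−c}) ‖x‖_∞^{2t₂}; moreover if t₂ = 0 then S_{t₁,0,V} ≥ 1 − n^{−c}. -/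

import Mathlib

noncomputable section
open scoped Classical
open Finset Filter Asymptotics Real

namespace Stmt6Aux

def injF (n t : ℕ) (W : Finset (Fin n)) : Finset (Fin t → Fin n) :=
  Finset.univ.filter (fun v => Function.Injective v ∧ ∀ i, v i ∈ W)

lemma injF_zero (n : ℕ) (W : Finset (Fin n)) : injF n 0 W = Finset.univ := by
  ext v
  simp only [injF, Finset.mem_filter, Finset.mem_univ, true_and, iff_true]
  exact ⟨Function.injective_of_subsingleton v, fun i => i.elim0⟩

lemma sum_injF_zero (n : ℕ) (g : Fin n → ℝ) (W : Finset (Fin n)) :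
    ∑ v ∈ injF n 0 W, ∏ i, g (v i) = 1 := by
  rw [injF_zero]
  simp

lemma injF_rec (n : ℕ) (g : Fin n → ℝ) (t : ℕ) (W : Finset (Fin n)) :
    ∑ v ∈ injF n (t+1) W, ∏ i, g (v i)
      = ∑ j ∈ W, g j * ∑ v ∈ injF n t (W.erase j), ∏ i, g (v i) := by
  have h1 : ∀ j ∈ W, g j * ∑ v ∈ injF n t (W.erase j), ∏ i, g (v i)
      = ∑ v ∈ injF n t (W.erase j), g j * ∏ i, g (v i) := fun j _ => Finset.mul_sum _ _ _
  rw [Finset.sum_congr rfl h1, ← Finset.sum_sigma W (fun j => injF n t (W.erase j))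
    (fun p => g p.1 * ∏ i, g (p.2 i))]
  refine Finset.sum_nbij' (fun v => ⟨v 0, Fin.tail v⟩)
    (fun p => Fin.cons p.1 p.2) ?_ ?_ ?_ ?_ ?_
  · intro v hv
    simp only [injF, Finset.mem_filter, Finset.mem_univ, true_and] at hv
    obtain ⟨hinj, hW⟩ := hv
    simp only [Finset.mem_sigma, injF, Finset.mem_filter, Finset.mem_univ, true_and]
    refine ⟨hW 0, ?_, ?_⟩
    · intro a b hab
      exact Fin.succ_injective _ (hinj hab)
    · intro i
      refine Finset.mem_erase.mpr ⟨?_, hW _⟩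
      intro h
      exact Fin.succ_ne_zero i (hinj h)
  · intro p hp
    simp only [Finset.mem_sigma, injF, Finset.mem_filter, Finset.mem_univ, true_and] at hp
    obtain ⟨hj, hinj, hW⟩ := hp
    simp only [injF, Finset.mem_filter, Finset.mem_univ, true_and]
    constructor
    · rw [Fin.cons_injective_iff]
      refine ⟨?_, hinj⟩
      rintro ⟨i, hi⟩
      exact (Finset.mem_erase.mp (hW i)).1 hi
    · intro i
      refine Fin.cases ?_ ?_ i
      · simpa using hj
      · intro i
        simpa using (Finset.mem_erase.mp (hW i)).2
  · intro v _
    exact Fin.cons_self_tail v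
  · intro p _
    simp [Fin.tail_cons]
  · intro v _
    simpa [Fin.tail] using Fin.prod_univ_succ (fun i => g (v i))

lemma upper_sum (n : ℕ) (g : Fin n → ℝ) (hg : ∀ j, 0 ≤ g j) :
    ∀ (t : ℕ) (W : Finset (Fin n)),
      ∑ v ∈ injF n t W, ∏ i, g (v i) ≤ (∑ j ∈ W, g j) ^ t := by
  intro t
  induction t with
  | zero => intro W; rw [sum_injF_zero]; simp
  | succ t ih =>
    intro W
    rw [injF_rec]
    calc ∑ j ∈ W, g j * ∑ v ∈ injF n t (W.erase j), ∏ i, g (v i)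
        ≤ ∑ j ∈ W, g j * (∑ j' ∈ W, g j') ^ t := by
          refine Finset.sum_le_sum fun j hj => ?_
          refine mul_le_mul_of_nonneg_left ?_ (hg j)
          refine le_trans (ih (W.erase j)) ?_
          refine pow_le_pow_left₀ (Finset.sum_nonneg fun j' _ => hg j') ?_ t
          exact Finset.sum_le_sum_of_subset_of_nonneg (Finset.erase_subset _ _)
            (fun j' _ _ => hg j')
      _ = (∑ j ∈ W, g j) ^ (t+1) := by rw [← Finset.sum_mul, pow_succ, mul_comm]

lemma lower_sum (n : ℕ) (g : Fin n → ℝ) (hg : ∀ j, 0 ≤ g j) (B : ℝ) (hB0 : 0 ≤ B)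
    (hB : ∀ j, g j ≤ B) :
    ∀ (t : ℕ) (W : Finset (Fin n)) (A : ℝ), 0 ≤ A → A + t * B ≤ ∑ j ∈ W, g j →
      A ^ t ≤ ∑ v ∈ injF n t W, ∏ i, g (v i) := by
  intro t
  induction t with
  | zero => intro W A _ _; rw [sum_injF_zero]; simp
  | succ t ih =>
    intro W A hA hAB
    rw [injF_rec]
    have hstep : ∀ j ∈ W, A ^ t ≤ ∑ v ∈ injF n t (W.erase j), ∏ i, g (v i) := by
      intro j hj
      refine ih (W.erase j) A hA ?_
      have : ∑ j' ∈ W.erase j, g j' = (∑ j' ∈ W, g j') - g j := by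
        rw [← Finset.add_sum_erase W g hj]; ring
      rw [this]
      have := hB j
      push_cast at hAB ⊢
      linarith
    calc A ^ (t+1) = A ^ t * A := by rw [pow_succ]
      _ ≤ A ^ t * (∑ j ∈ W, g j) := by
          refine mul_le_mul_of_nonneg_left ?_ (pow_nonneg hA t)
          have h1 : (0:ℝ) ≤ ((t:ℝ)+1) * B := by positivity
          push_cast at hAB ⊢
          linarith
      _ = ∑ j ∈ W, g j * A ^ t := by
          rw [mul_comm, Finset.sum_mul]
      _ ≤ ∑ j ∈ W, g j * ∑ v ∈ injF n t (W.erase j), ∏ i, g (v i) := by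
          refine Finset.sum_le_sum fun j hj => mul_le_mul_of_nonneg_left (hstep j hj) (hg j)

lemma card_injF_upper (n t : ℕ) (W : Finset (Fin n)) :
    ((injF n t W).card : ℝ) ≤ (W.card : ℝ) ^ t := by
  have h := upper_sum n (fun _ => 1) (fun _ => zero_le_one) t W
  simpa using h

lemma card_injF_lower (n t : ℕ) (W : Finset (Fin n)) (ht : (t : ℝ) ≤ (W.card : ℝ)) :
    ((W.card : ℝ) - t) ^ t ≤ ((injF n t W).card : ℝ) := by
  have h := lower_sum n (fun _ => 1) (fun _ => zero_le_one) 1 zero_le_one (fun _ => le_refl 1)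
    t W ((W.card : ℝ) - t) (by linarith) (by simp)
  simpa using h

lemma evbound (ε K : ℝ) (hε : 0 < ε) (hK : 0 < K) :
    ∀ᶠ x : ℝ in atTop, 12*K^2*(Real.log x)^2 + 6*K*Real.log x ≤ x ^ (ε/2) := by
  have h1 : Real.log =o[atTop] fun x : ℝ => x ^ (ε/8) :=
    isLittleO_log_rpow_atTop (by positivity)
  have h2 : Tendsto (fun x:ℝ => x ^ (ε/4)) atTop atTop :=
    tendsto_rpow_atTop (by positivity)
  filter_upwards [h1.def one_pos, h2.eventually_ge_atTop (12*K^2 + 6*K + 1),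
    eventually_ge_atTop (1:ℝ)] with x hlog hbig hx1
  have hx0 : (0:ℝ) < x := lt_of_lt_of_le one_pos hx1
  have hlog0 : 0 ≤ Real.log x := Real.log_nonneg hx1
  have hr8 : (0:ℝ) ≤ x ^ (ε/8) := (Real.rpow_pos_of_pos hx0 _).le
  have hr4 : (0:ℝ) ≤ x ^ (ε/4) := (Real.rpow_pos_of_pos hx0 _).le
  rw [Real.norm_eq_abs, Real.norm_eq_abs, one_mul, abs_of_nonneg hlog0,
    abs_of_nonneg hr8] at hlog
  have hsq : (Real.log x)^2 ≤ x ^ (ε/4) := by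
    have h := mul_le_mul hlog hlog hlog0 hr8
    calc (Real.log x)^2 = Real.log x * Real.log x := sq (Real.log x)
      _ ≤ x^(ε/8) * x^(ε/8) := h
      _ = x^(ε/4) := by rw [← Real.rpow_add hx0]; congr 1; ring
  have hlx4 : Real.log x ≤ x ^ (ε/4) :=
    le_trans hlog (Real.rpow_le_rpow_of_exponent_le hx1 (by linarith))
  have hxx : x^(ε/4) * x^(ε/4) = x^(ε/2) := by
    rw [← Real.rpow_add hx0]; congr 1; ring
  have e1 : 12*K^2*(Real.log x)^2 ≤ 12*K^2 * x^(ε/4) :=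
    mul_le_mul_of_nonneg_left hsq (by positivity)
  have e2 : 6*K*Real.log x ≤ 6*K*x^(ε/4) :=
    mul_le_mul_of_nonneg_left hlx4 (by positivity)
  have e3 : (12*K^2+6*K+1) * x^(ε/4) ≤ x^(ε/4) * x^(ε/4) :=
    mul_le_mul_of_nonneg_right hbig hr4
  linarith [e1, e2, e3, hr4, hxx]

end Stmt6Aux

set_option maxHeartbeats 1000000

/-- bounds on the average of `∏ x_{v_i}² ∏ x_{v_i}⁴` over uniformly random
ordered tuples of distinct indices avoiding `V`.  Here `‖x‖` is the sup-norm `‖x‖_∞`. -/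
theorem stmt_6 (ε K : ℝ) (hε0 : 0 < ε) (hε1 : ε < 1) (hK : 0 < K) :
    ∃ c : ℝ, 0 < c ∧ ∃ N : ℕ, ∀ n : ℕ, N ≤ n →
    ∀ (V : Finset (Fin n)) (x : Fin n → ℝ) (t₁ t₂ : ℕ),
      (∑ i, (x i) ^ 2) = (n : ℝ) →
      ‖x‖ ^ 2 ≤ (n : ℝ) ^ ((1 : ℝ) - ε) →
      (V.card : ℝ) ≤ K * Real.log n →
      (t₁ : ℝ) ≤ K * Real.log n →
      (t₂ : ℝ) ≤ K * Real.log n →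
      -- the average S_{t₁,t₂,V} over ordered tuples of distinct elements of [n]∖V
      ∀ F : Finset (Fin (t₁ + t₂) → Fin n),
        F = Finset.univ.filter (fun v => Function.Injective v ∧ ∀ i, v i ∉ V) →
      ∀ S : ℝ,
        S = (∑ v ∈ F, ∏ i : Fin (t₁ + t₂),
              (if (i : ℕ) < t₁ then (x (v i)) ^ 2 else (x (v i)) ^ 4)) / (F.card : ℝ) →
      S ≤ (1 + (n : ℝ) ^ (-c)) * ‖x‖ ^ (2 * t₂) ∧
        (t₂ = 0 → 1 - (n : ℝ) ^ (-c) ≤ S) := by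
  refine ⟨ε/2, by positivity, ?_⟩
  have hev : ∀ᶠ m : ℕ in atTop,
      12*K^2*(Real.log m)^2 + 6*K*Real.log m ≤ (m:ℝ) ^ (ε/2) :=
    tendsto_natCast_atTop_atTop.eventually (Stmt6Aux.evbound ε K hε0 hK)
  obtain ⟨N₁, hN₁⟩ := eventually_atTop.mp hev
  refine ⟨max N₁ 3, ?_⟩
  intro n hn V x t₁ t₂ hsum hnorm hV ht₁ ht₂ F hF S hS
  have hn3 : (3:ℝ) ≤ (n:ℝ) := by
    have : 3 ≤ n := le_trans (le_max_right _ _) hn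
    exact_mod_cast this
  have hn1 : (1:ℝ) ≤ (n:ℝ) := by linarith
  have hn0 : (0:ℝ) < (n:ℝ) := by linarith
  set L : ℝ := K * Real.log n with hLdef
  have hL0 : 0 ≤ L := mul_nonneg hK.le (Real.log_nonneg hn1)
  have hgood := hN₁ n (le_trans (le_max_left _ _) hn)
  have h12L2 : 12*L^2 ≤ (n:ℝ)^(ε/2) := by
    have h2 : 0 ≤ 6*K*Real.log n := by positivity
    have hL2 : 12*L^2 = 12*K^2 * (Real.log n)^2 := by rw [hLdef]; ring
    linarith
  have h6L : 6*L ≤ (n:ℝ)^(ε/2) := by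
    have h2 : 0 ≤ 12*K^2*(Real.log n)^2 := by positivity
    have hL1 : 6*L = 6*K*Real.log n := by rw [hLdef]; ring
    linarith
  set d : ℝ := (n:ℝ)^(-(ε/2)) with hddef
  have hd0 : 0 ≤ d := (Real.rpow_pos_of_pos hn0 _).le
  have hd1 : d ≤ 1 := Real.rpow_le_one_of_one_le_of_nonpos hn1 (by linarith)
  have hrw1 : (n:ℝ)^((1:ℝ)-ε) = (n:ℝ) * (n:ℝ)^(-ε) := by
    rw [sub_eq_add_neg, Real.rpow_add hn0, Real.rpow_one]
  have hrwnd : (n:ℝ) * d = (n:ℝ)^((1:ℝ)-ε/2) := by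
    rw [hddef, sub_eq_add_neg, Real.rpow_add hn0, Real.rpow_one]
  have hmono : ∀ a b : ℝ, a ≤ b → (n:ℝ)^a ≤ (n:ℝ)^b := fun a b h =>
    Real.rpow_le_rpow_of_exponent_le hn1 h
  have hnd : 12*L^2 ≤ (n:ℝ)*d := by
    rw [hrwnd]; exact le_trans h12L2 (hmono _ _ (by linarith))
  have hrw2 : (n:ℝ)^(ε/2) * (n:ℝ)^(-ε) = d := by
    rw [hddef, ← Real.rpow_add hn0]; congr 1; ring
  have hne0 : (0:ℝ) < (n:ℝ)^(-ε) := Real.rpow_pos_of_pos hn0 _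
  have hLd : 6*L^2*(n:ℝ)^(-ε) ≤ d := by
    have h1 : 6*L^2 ≤ (n:ℝ)^(ε/2) := by linarith [sq_nonneg L]
    calc 6*L^2*(n:ℝ)^(-ε) ≤ (n:ℝ)^(ε/2) * (n:ℝ)^(-ε) :=
        mul_le_mul_of_nonneg_right h1 hne0.le
      _ = d := hrw2
  have h6Lε : 6*L ≤ (n:ℝ)^ε := le_trans h6L (hmono _ _ (by linarith))
  have h3Lne : 3*L*(n:ℝ)^(-ε) ≤ 1/2 := by
    have h1 : 6*L*(n:ℝ)^(-ε) ≤ (n:ℝ)^ε * (n:ℝ)^(-ε) :=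
      mul_le_mul_of_nonneg_right h6Lε hne0.le
    rw [← Real.rpow_add hn0] at h1
    rw [show ε + -ε = 0 from by ring, Real.rpow_zero] at h1
    linarith
  have h6Ln : 6*L ≤ (n:ℝ) := by
    have h1 := hmono (ε/2) 1 (by linarith)
    rw [Real.rpow_one] at h1
    linarith
  -- cast and cardinality facts
  have ht2L : ((t₁+t₂ : ℕ):ℝ) ≤ 2*L := by push_cast; linarith
  have ht0 : (0:ℝ) ≤ ((t₁+t₂ : ℕ):ℝ) := Nat.cast_nonneg _
  have hFW : F = Stmt6Aux.injF n (t₁+t₂) Vᶜ := by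
    rw [hF]; ext v; simp [Stmt6Aux.injF, Finset.mem_compl]
  have hVn : V.card ≤ n := le_trans (Finset.card_le_univ V) (by simp)
  have hmcast : ((Vᶜ : Finset (Fin n)).card : ℝ) = (n:ℝ) - (V.card:ℝ) := by
    rw [Finset.card_compl, Fintype.card_fin, Nat.cast_sub hVn]
  have hVc0 : (0:ℝ) ≤ (V.card:ℝ) := Nat.cast_nonneg _
  have hm_le : ((Vᶜ : Finset (Fin n)).card : ℝ) ≤ (n:ℝ) := by rw [hmcast]; linarith
  have hmt : ((t₁+t₂ : ℕ):ℝ) ≤ ((Vᶜ : Finset (Fin n)).card : ℝ) := by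
    rw [hmcast]; linarith
  have hmt3 : (n:ℝ) - 3*L ≤ ((Vᶜ : Finset (Fin n)).card : ℝ) - ((t₁+t₂ : ℕ):ℝ) := by
    rw [hmcast]; linarith
  have hn3L : (0:ℝ) < (n:ℝ) - 3*L := by linarith
  -- bound on squares
  have hB0 : (0:ℝ) ≤ ‖x‖^2 := by positivity
  have hgB : ∀ j, (x j)^2 ≤ ‖x‖^2 := by
    intro j
    have h1 : ‖x j‖ ≤ ‖x‖ := norm_le_pi_norm x j
    have h2 := pow_le_pow_left₀ (norm_nonneg (x j)) h1 2
    rwa [Real.norm_eq_abs, sq_abs] at h2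
  -- sums of squares over W and V
  have hsumW_le : ∑ j ∈ (Vᶜ : Finset (Fin n)), (x j)^2 ≤ (n:ℝ) := by
    rw [← hsum]
    exact Finset.sum_le_sum_of_subset_of_nonneg (Finset.subset_univ _)
      (fun j _ _ => sq_nonneg _)
  have hsumsplit : ∑ j ∈ (Vᶜ : Finset (Fin n)), (x j)^2 + ∑ j ∈ V, (x j)^2 = (n:ℝ) := by
    rw [← hsum]; exact Finset.sum_compl_add_sum V _
  have hsumV_le : ∑ j ∈ V, (x j)^2 ≤ L * (n:ℝ)^((1:ℝ)-ε) := by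
    have h1 : ∑ j ∈ V, (x j)^2 ≤ V.card • (‖x‖^2) :=
      Finset.sum_le_card_nsmul V _ _ (fun j _ => hgB j)
    rw [nsmul_eq_mul] at h1
    have h2 : (V.card:ℝ) * (‖x‖^2) ≤ L * (n:ℝ)^((1:ℝ)-ε) :=
      mul_le_mul hV hnorm hB0 hL0
    linarith
  have hsumW_ge : (n:ℝ) - L*(n:ℝ)^((1:ℝ)-ε) ≤ ∑ j ∈ (Vᶜ : Finset (Fin n)), (x j)^2 := by
    linarith
  -- cardinality of F
  have hcard_le : (F.card:ℝ) ≤ (n:ℝ)^(t₁+t₂) := by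
    rw [hFW]
    exact le_trans (Stmt6Aux.card_injF_upper n (t₁+t₂) Vᶜ)
      (pow_le_pow_left₀ (Nat.cast_nonneg _) hm_le _)
  have hcard_ge0 : ((n:ℝ)-3*L)^(t₁+t₂) ≤ (F.card:ℝ) := by
    rw [hFW]
    refine le_trans ?_ (Stmt6Aux.card_injF_lower n (t₁+t₂) Vᶜ hmt)
    exact pow_le_pow_left₀ hn3L.le hmt3 _
  have hFpos : (0:ℝ) < (F.card:ℝ) := lt_of_lt_of_le (pow_pos hn3L _) hcard_ge0
  -- refined lower bound on |F|
  have h32 : 3*L/(n:ℝ) ≤ 2 := by rw [div_le_iff₀ hn0]; linarith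
  have hbern1 : (n:ℝ)^(t₁+t₂) * (1 - d/2) ≤ (F.card:ℝ) := by
    have key : ((n:ℝ)-3*L)^(t₁+t₂) = (n:ℝ)^(t₁+t₂) * (1 - 3*L/(n:ℝ))^(t₁+t₂) := by
      rw [← mul_pow]; congr 1; field_simp
    have hber : 1 - ((t₁+t₂:ℕ):ℝ)*(3*L/(n:ℝ)) ≤ (1 - 3*L/(n:ℝ))^(t₁+t₂) := by
      have h := one_add_mul_le_pow (a := -(3*L/(n:ℝ))) (by linarith) (t₁+t₂)
      rw [show (1:ℝ) + -(3*L/(n:ℝ)) = 1 - 3*L/(n:ℝ) from by ring] at h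
      push_cast at h ⊢
      linarith
    have hq : ((t₁+t₂:ℕ):ℝ)*(3*L/(n:ℝ)) ≤ d/2 := by
      rw [show ((t₁+t₂:ℕ):ℝ)*(3*L/(n:ℝ)) = (((t₁+t₂:ℕ):ℝ)*(3*L))/(n:ℝ) from by ring,
        div_le_iff₀ hn0]
      have hmul : ((t₁+t₂:ℕ):ℝ)*(3*L) ≤ (2*L)*(3*L) :=
        mul_le_mul_of_nonneg_right ht2L (by positivity)
      have hrepl : (2*L)*(3*L) = 6*L^2 := by ring
      linarith
    calc (n:ℝ)^(t₁+t₂) * (1-d/2)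
        ≤ (n:ℝ)^(t₁+t₂) * (1 - 3*L/(n:ℝ))^(t₁+t₂) :=
          mul_le_mul_of_nonneg_left (by linarith) (pow_nonneg hn0.le _)
      _ = ((n:ℝ)-3*L)^(t₁+t₂) := key.symm
      _ ≤ (F.card:ℝ) := hcard_ge0
  -- pointwise comparison of the mixed product
  have hprodconst : ∏ i : Fin (t₁+t₂), (if (i:ℕ) < t₁ then (1:ℝ) else ‖x‖^2)
      = ‖x‖^(2*t₂) := by
    calc ∏ i : Fin (t₁+t₂), (if (i:ℕ) < t₁ then (1:ℝ) else ‖x‖^2)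
        = (∏ _i : Fin t₁, (1:ℝ)) * ∏ _i : Fin t₂, ‖x‖^2 := by
          rw [Fin.prod_univ_add]
          congr 1
          · exact Finset.prod_congr rfl fun i _ => if_pos (by simpa using i.isLt)
          · exact Finset.prod_congr rfl fun i _ => if_neg (by simp)
      _ = ‖x‖^(2*t₂) := by simp [pow_mul]
  have hper : ∀ v ∈ F,
      (∏ i : Fin (t₁+t₂), if (i:ℕ) < t₁ then (x (v i))^2 else (x (v i))^4)
        ≤ ‖x‖^(2*t₂) * ∏ i : Fin (t₁+t₂), (x (v i))^2 := by
    intro v _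
    have h1 : (∏ i : Fin (t₁+t₂), if (i:ℕ) < t₁ then (x (v i))^2 else (x (v i))^4)
        ≤ ∏ i : Fin (t₁+t₂), ((if (i:ℕ) < t₁ then (1:ℝ) else ‖x‖^2) * (x (v i))^2) := by
      refine Finset.prod_le_prod (fun i _ => ?_) (fun i _ => ?_)
      · by_cases h : (i:ℕ) < t₁ <;> simp [h] <;> positivity
      · by_cases h : (i:ℕ) < t₁
        · simp [h]
        · simp only [h, if_false]
          have h4 : (x (v i))^2*(x (v i))^2 ≤ ‖x‖^2 * (x (v i))^2 :=
            mul_le_mul_of_nonneg_right (hgB (v i)) (sq_nonneg _)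
          linarith [h4]
    rwa [Finset.prod_mul_distrib, hprodconst] at h1
  have hP_le : ∑ v ∈ F, ∏ i : Fin (t₁+t₂), (x (v i))^2 ≤ (n:ℝ)^(t₁+t₂) := by
    rw [hFW]
    exact le_trans (Stmt6Aux.upper_sum n (fun j => (x j)^2) (fun j => sq_nonneg _) (t₁+t₂) Vᶜ)
      (pow_le_pow_left₀ (Finset.sum_nonneg fun j _ => sq_nonneg _) hsumW_le _)
  constructor
  · -- upper bound
    rw [hS, div_le_iff₀ hFpos]
    have hscal : (n:ℝ)^(t₁+t₂) ≤ (1+d) * ((n:ℝ)^(t₁+t₂) * (1 - d/2)) := by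
      have hkey : 0 ≤ (n:ℝ)^(t₁+t₂) * (d * (1 - d)) :=
        mul_nonneg (pow_nonneg hn0.le _) (mul_nonneg hd0 (by linarith))
      have hexp : (1+d) * ((n:ℝ)^(t₁+t₂) * (1 - d/2))
          = (n:ℝ)^(t₁+t₂) + ((n:ℝ)^(t₁+t₂) * (d * (1 - d)))/2 := by ring
      linarith [hkey, hexp]
    have h2 : (1+d) * ((n:ℝ)^(t₁+t₂) * (1-d/2)) ≤ (1+d) * (F.card:ℝ) :=
      mul_le_mul_of_nonneg_left hbern1 (by linarith)
    calc (∑ v ∈ F, ∏ i : Fin (t₁+t₂), if (i:ℕ) < t₁ then (x (v i))^2 else (x (v i))^4)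
        ≤ ∑ v ∈ F, ‖x‖^(2*t₂) * ∏ i : Fin (t₁+t₂), (x (v i))^2 := Finset.sum_le_sum hper
      _ = ‖x‖^(2*t₂) * ∑ v ∈ F, ∏ i : Fin (t₁+t₂), (x (v i))^2 := by rw [Finset.mul_sum]
      _ ≤ ‖x‖^(2*t₂) * (n:ℝ)^(t₁+t₂) :=
          mul_le_mul_of_nonneg_left hP_le (by positivity)
      _ ≤ ‖x‖^(2*t₂) * ((1+d) * (F.card:ℝ)) :=
          mul_le_mul_of_nonneg_left (le_trans hscal h2) (by positivity)
      _ = (1+d) * ‖x‖^(2*t₂) * (F.card:ℝ) := by ring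
  · -- lower bound when t₂ = 0
    intro ht₂0
    subst ht₂0
    have hTP : (∑ v ∈ F, ∏ i : Fin (t₁+0),
          (if (i:ℕ) < t₁ then (x (v i))^2 else (x (v i))^4))
        = ∑ v ∈ F, ∏ i : Fin (t₁+0), (x (v i))^2 := by
      refine Finset.sum_congr rfl fun v _ => Finset.prod_congr rfl fun i _ => if_pos ?_
      have := i.isLt; omega
    have h3L1 : 3*L*(n:ℝ)^((1:ℝ)-ε) ≤ (n:ℝ)/2 := by
      rw [hrw1]
      calc 3*L*((n:ℝ)*(n:ℝ)^(-ε)) = (3*L*(n:ℝ)^(-ε))*(n:ℝ) := by ring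
        _ ≤ (1/2)*(n:ℝ) := mul_le_mul_of_nonneg_right h3Lne hn0.le
        _ = (n:ℝ)/2 := by ring
    set A : ℝ := (n:ℝ) - 3*L*(n:ℝ)^((1:ℝ)-ε) with hAdef
    have hA0 : 0 ≤ A := by rw [hAdef]; linarith
    have hTge : A^(t₁+0) ≤ ∑ v ∈ F, ∏ i : Fin (t₁+0), (x (v i))^2 := by
      rw [hFW]
      refine Stmt6Aux.lower_sum n _ (fun j => sq_nonneg _) (‖x‖^2) hB0 hgB (t₁+0) Vᶜ A hA0 ?_
      have h1 : ((t₁+0:ℕ):ℝ) * (‖x‖^2) ≤ 2*L*(n:ℝ)^((1:ℝ)-ε) := by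
        refine mul_le_mul ht2L hnorm hB0 (by linarith)
      have h2 : (0:ℝ) ≤ L*(n:ℝ)^((1:ℝ)-ε) := by positivity
      rw [hAdef]
      linarith
    have hAber : (1 - d) * (n:ℝ)^(t₁+0) ≤ A^(t₁+0) := by
      have hArw : A = (n:ℝ) * (1 - 3*L*(n:ℝ)^(-ε)) := by
        rw [hAdef, hrw1]; ring
      have hber2 : 1 - ((t₁+0:ℕ):ℝ)*(3*L*(n:ℝ)^(-ε)) ≤ (1 - 3*L*(n:ℝ)^(-ε))^(t₁+0) := by
        have h := one_add_mul_le_pow (a := -(3*L*(n:ℝ)^(-ε))) (by linarith) (t₁+0)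
        rw [show (1:ℝ) + -(3*L*(n:ℝ)^(-ε)) = 1 - 3*L*(n:ℝ)^(-ε) from by ring] at h
        linarith
      have hq2 : ((t₁+0:ℕ):ℝ)*(3*L*(n:ℝ)^(-ε)) ≤ d := by
        have h1 : ((t₁+0:ℕ):ℝ)*(3*L) ≤ 6*L^2 := by
          have hmul : ((t₁+0:ℕ):ℝ)*(3*L) ≤ (2*L)*(3*L) :=
            mul_le_mul_of_nonneg_right ht2L (by positivity)
          have hrepl : (2*L)*(3*L) = 6*L^2 := by ring
          linarith
        calc ((t₁+0:ℕ):ℝ)*(3*L*(n:ℝ)^(-ε)) = (((t₁+0:ℕ):ℝ)*(3*L))*(n:ℝ)^(-ε) := by ring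
          _ ≤ (6*L^2)*(n:ℝ)^(-ε) := mul_le_mul_of_nonneg_right h1 hne0.le
          _ ≤ d := hLd
      calc (1-d)*(n:ℝ)^(t₁+0)
          ≤ (1 - 3*L*(n:ℝ)^(-ε))^(t₁+0) * (n:ℝ)^(t₁+0) := by
            refine mul_le_mul_of_nonneg_right ?_ (pow_nonneg hn0.le _)
            linarith
        _ = A^(t₁+0) := by rw [hArw, mul_pow]; ring
    rw [hS, le_div_iff₀ hFpos, hTP]
    calc (1-d)*(F.card:ℝ) ≤ (1-d)*(n:ℝ)^(t₁+0) :=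
        mul_le_mul_of_nonneg_left hcard_le (by linarith)
      _ ≤ A^(t₁+0) := hAber
      _ ≤ _ := hTge


end
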